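/- arXiv:math/0408300 — 13 statements merged into one kernel-verified Lean document; each statement's English description precedes it below -/
import Mathlib

section
/- Let A be a nonunital associative ring. If a, b ∈ L(A), then a*b ∈ L(A); that is, [L(A)]² ⊆ L(A). -/
/-- In a nonunital associative ring `A`, if `a, b` are endomorphic left elements
(`a*x*a*y = a*x*y` for all `x, y`), then so is `a*b`; that is, `[L(A)]² ⊆ L(A)`. -/
theorem stmt_2 {A : Type*} [NonUnitalRing A]
    {L : Set A}
    (hL : L = {a : A | ∀ x y : A, a * x * a * y = a * x * y}) :
    ∀ a ∈ L, ∀ b ∈ L, a * b ∈ L := by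
  subst hL
  intro a ha b hb x y
  calc a * b * x * (a * b) * y = a * (b * x) * a * (b * y) := by
        simp only [mul_assoc]
    _ = a * (b * x) * (b * y) := ha (b * x) (b * y)
    _ = a * (b * x * b * y) := by simp only [mul_assoc]
    _ = a * (b * x * y) := by rw [hb x y]
    _ = a * b * x * y := by simp only [mul_assoc]
end

section
/- Let A be a complex algebra, let Ã be its unitization (the minimal unital complex algebra containing A), and let b be an invertible element of Ã. If c ∈ L(A), then the element b*c*b⁻¹ (which lies in A, since A is an ideal of Ã) belongs to L(A). Consequently L(A) = ⋃_{b ∈ G(Ã)} b·L(A)·b⁻¹, where G(Ã) is the group of invertible elements of Ã. -/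
lemma inr_snd_of_fst_zero {A : Type*} [NonUnitalRing A] [Module ℂ A]
    [IsScalarTower ℂ A A] [SMulCommClass ℂ A A]
    {x : Unitization ℂ A} (h : x.fst = 0) :
    (Unitization.inr x.snd : Unitization ℂ A) = x := by
  conv_rhs => rw [← Unitization.inl_fst_add_inr_snd_eq x]
  rw [h]
  simp

/-- Let `A` be a complex (not necessarily unital) algebra and `Ã = Unitization ℂ A`
its unitization. If `b` is invertible in `Ã` and `c ∈ L(A)`, then the element of `A`
corresponding to `b * c * b⁻¹` belongs to `L(A)`; consequently
`L(A) = ⋃_{b ∈ G(Ã)} b · L(A) · b⁻¹`. -/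
theorem stmt_3 {A : Type*} [NonUnitalRing A] [Module ℂ A]
    [IsScalarTower ℂ A A] [SMulCommClass ℂ A A]
    {L : Set A}
    (hL : L = {a : A | ∀ x y : A, a * x * a * y = a * x * y}) :
    (∀ (b : (Unitization ℂ A)ˣ) (c : A), c ∈ L →
      ∃ d ∈ L, (Unitization.inr d : Unitization ℂ A) =
        (b : Unitization ℂ A) * Unitization.inr c * ((b⁻¹ : (Unitization ℂ A)ˣ) : Unitization ℂ A)) ∧
    L = ⋃ b : (Unitization ℂ A)ˣ,
      {a : A | ∃ c ∈ L, (Unitization.inr a : Unitization ℂ A) =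
        (b : Unitization ℂ A) * Unitization.inr c * ((b⁻¹ : (Unitization ℂ A)ˣ) : Unitization ℂ A)} := by
  subst hL
  have key : ∀ (b : (Unitization ℂ A)ˣ) (c : A),
      c ∈ {a : A | ∀ x y : A, a * x * a * y = a * x * y} →
      ∃ d ∈ {a : A | ∀ x y : A, a * x * a * y = a * x * y},
        (Unitization.inr d : Unitization ℂ A) =
          (b : Unitization ℂ A) * Unitization.inr c * ((b⁻¹ : (Unitization ℂ A)ˣ) : Unitization ℂ A) := by
    intro b c hc
    set B : Unitization ℂ A := (b : Unitization ℂ A) with hB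
    set Bi : Unitization ℂ A := ((b⁻¹ : (Unitization ℂ A)ˣ) : Unitization ℂ A) with hBi
    have hBBi : B * Bi = 1 := b.mul_inv
    have hBiB : Bi * B = 1 := b.inv_mul
    set P : Unitization ℂ A := B * Unitization.inr c * Bi with hP
    have hPfst : P.fst = 0 := by simp [hP]
    have hPinr : (Unitization.inr P.snd : Unitization ℂ A) = P := inr_snd_of_fst_zero hPfst
    refine ⟨P.snd, ?_, hPinr⟩
    intro x y
    apply Unitization.inr_injective (R := ℂ)
    have lhs : (Unitization.inr (P.snd * x * P.snd * y) : Unitization ℂ A)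
        = P * Unitization.inr x * P * Unitization.inr y := by
      simp only [Unitization.inr_mul, hPinr]
    have rhs : (Unitization.inr (P.snd * x * y) : Unitization ℂ A)
        = P * Unitization.inr x * Unitization.inr y := by
      simp only [Unitization.inr_mul, hPinr]
    rw [lhs, rhs]
    -- define u, v in A
    set U : Unitization ℂ A := Bi * Unitization.inr x * B with hU
    set V : Unitization ℂ A := Bi * Unitization.inr y with hV
    have hUfst : U.fst = 0 := by simp [hU]
    have hVfst : V.fst = 0 := by simp [hV]
    have hUinr : (Unitization.inr U.snd : Unitization ℂ A) = U := inr_snd_of_fst_zero hUfst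
    have hVinr : (Unitization.inr V.snd : Unitization ℂ A) = V := inr_snd_of_fst_zero hVfst
    have hc' : (Unitization.inr (c * U.snd * c * V.snd) : Unitization ℂ A)
        = Unitization.inr (c * U.snd * V.snd) := by
      rw [hc U.snd V.snd]
    calc P * Unitization.inr x * P * Unitization.inr y
        = B * (Unitization.inr c * U * Unitization.inr c * V) := by
          rw [hU, hV, hP]
          have : B * Unitization.inr c * Bi * Unitization.inr x *
              (B * Unitization.inr c * Bi) * Unitization.inr y
            = B * (Unitization.inr c * (Bi * Unitization.inr x * B) *
              Unitization.inr c * (Bi * Unitization.inr y)) := by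
            simp only [mul_assoc]
          rw [this]
      _ = B * (Unitization.inr c * U * V) := by
          congr 1
          rw [← hUinr, ← hVinr]
          simp only [← Unitization.inr_mul]
          rw [hc U.snd V.snd]
      _ = P * Unitization.inr x * Unitization.inr y := by
          rw [hU, hV, hP]
          have : B * (Unitization.inr c * (Bi * Unitization.inr x * B) *
              (Bi * Unitization.inr y))
            = B * Unitization.inr c * Bi * Unitization.inr x *
              (B * Bi) * Unitization.inr y := by
            simp only [mul_assoc]
          rw [this, hBBi, mul_one]
  refine ⟨key, ?_⟩
  ext a
  simp only [Set.mem_iUnion, Set.mem_setOf_eq]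
  constructor
  · intro ha
    exact ⟨1, a, ha, by simp⟩
  · rintro ⟨b, c, hc, hac⟩
    obtain ⟨d, hd, hdinr⟩ := key b c hc
    have : a = d := Unitization.inr_injective (R := ℂ) (hac.trans hdinr.symm)
    rw [this]; exact hd
end

section
/- Let A be a nonunital associative ring and a ∈ A. The following are equivalent: (1) a is nilpotent and a ∈ L(A); (2) a³ = 0 and a ∈ L(A); (3) a ∈ N'₃(A), i.e. a*x*y = 0 for all x, y ∈ A. -/
/-- `nupow a n` is the `n`-th power `aⁿ` of `a` in a non-unital ring, for `n ≥ 1`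
(with junk value `0` at `n = 0`). -/
def nupow {A : Type*} [NonUnitalRing A] (a : A) : ℕ → A
  | 0 => 0
  | 1 => a
  | (n + 2) => nupow a (n + 1) * a

lemma nupow_stable {A : Type*} [NonUnitalRing A] (a : A)
    (h : ∀ x y : A, a * x * a * y = a * x * y) (n : ℕ) :
    nupow a (n + 3) = a * a * a := by
  induction n with
  | zero => rfl
  | succ k ih =>
    show nupow a (k + 3) * a = a * a * a
    rw [ih]
    have := h a a
    -- a * a * a * a = a * a * a
    simpa using this

/-- In a nonunital associative ring `A`, the following are equivalent for `a ∈ A`: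
(1) `a` is nilpotent and `a ∈ L(A)`; (2) `a³ = 0` and `a ∈ L(A)`;
(3) `a ∈ N'₃(A)`, i.e. `a*x*y = 0` for all `x, y`. -/
theorem stmt_5 {A : Type*} [NonUnitalRing A] (a : A)
    {L : Set A}
    (hL : L = {a : A | ∀ x y : A, a * x * a * y = a * x * y}) :
    (((∃ n : ℕ, 1 ≤ n ∧ nupow a n = 0) ∧ a ∈ L) ↔ (a * a * a = 0 ∧ a ∈ L)) ∧
    ((a * a * a = 0 ∧ a ∈ L) ↔ ∀ x y : A, a * x * y = 0) := by
  subst hL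
  constructor
  · constructor
    · rintro ⟨⟨n, hn, hzero⟩, hmem⟩
      refine ⟨?_, hmem⟩
      match n, hn with
      | 1, _ => simp only [nupow] at hzero; simp [hzero]
      | 2, _ =>
        simp only [nupow] at hzero
        show a * a * a = 0
        rw [hzero, zero_mul]
      | (k + 3), _ =>
        rw [nupow_stable a hmem k] at hzero
        exact hzero
    · rintro ⟨h3, hmem⟩
      exact ⟨⟨3, by norm_num, by simpa [nupow] using h3⟩, hmem⟩
  · constructor
    · rintro ⟨h3, hmem⟩ x y
      have h1 : a * x * y = a * x * (a * y) := by
        have := hmem x y; rw [mul_assoc] at this; exact this.symm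
      have h2 : a * x * (a * y) = a * x * (a * (a * y)) := by
        have := hmem x (a * y); rw [mul_assoc] at this; exact this.symm
      have h3' : a * x * (a * (a * y)) = a * x * (a * (a * (a * y))) := by
        have := hmem x (a * (a * y)); rw [mul_assoc] at this; exact this.symm
      have hz : a * (a * (a * y)) = 0 := by
        have : a * a * a * y = 0 := by rw [h3, zero_mul]
        rw [mul_assoc, mul_assoc] at this; exact this
      rw [h1, h2, h3', hz, mul_zero]
    · intro h
      refine ⟨h a a, fun x y => ?_⟩
      rw [h x a, h x y, zero_mul]
end

section
/- Let A be a complex Banach algebra (not necessarily unital) and a ∈ A. Then a is quasinilpotent (i.e. ‖aⁿ‖^{1/n} → 0 as n → ∞) and a ∈ L(A) if and only if a ∈ N'₃(A), i.e. a*x*y = 0 for all x, y ∈ A. -/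
/-- In a complex (not necessarily unital) Banach algebra `A`, an element `a` is
quasinilpotent (`‖aⁿ‖^(1/n) → 0`) and belongs to `L(A)` if and only if
`a ∈ N'₃(A)`, i.e. `a*x*y = 0` for all `x, y`. -/
theorem stmt_6 {A : Type*} [NonUnitalNormedRing A] [NormedSpace ℂ A]
    [IsScalarTower ℂ A A] [SMulCommClass ℂ A A] [CompleteSpace A] (a : A) :
    (Filter.Tendsto (fun n : ℕ => ‖nupow a n‖ ^ ((1 : ℝ) / n)) Filter.atTop (nhds 0) ∧
        (∀ x y : A, a * x * a * y = a * x * y)) ↔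
      ∀ x y : A, a * x * y = 0 := by
  constructor
  · rintro ⟨h1, h2⟩ x y
    -- key identity from the L(A) property
    have key : ∀ n : ℕ, ∀ z : A, a * x * nupow a (n + 1) * z = a * x * z := by
      intro n
      induction n with
      | zero =>
        intro z
        have : nupow a 1 = a := rfl
        rw [this]; exact h2 x z
      | succ k ih =>
        intro z
        have e : a * x * nupow a (k + 2) * z
            = a * x * nupow a (k + 1) * (a * z) := by
          show a * x * (nupow a (k + 1) * a) * z = _
          rw [← mul_assoc, mul_assoc]
        rw [e, ih (a * z), ← mul_assoc, h2]
    -- ‖nupow a n‖ → 0 from quasinilpotence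
    have hb : ∀ᶠ n : ℕ in Filter.atTop,
        ‖nupow a n‖ ^ ((1 : ℝ) / n) < 1 / 2 :=
      h1.eventually (gt_mem_nhds (by norm_num))
    have hb2 : ∀ᶠ n : ℕ in Filter.atTop, ‖nupow a n‖ ≤ (1 / 2 : ℝ) ^ n := by
      filter_upwards [hb, Filter.eventually_ge_atTop 1] with n hn hn1
      have hr : (0 : ℝ) ≤ ‖nupow a n‖ := norm_nonneg _
      have hncast : (n : ℝ) ≠ 0 := by
        exact_mod_cast Nat.one_le_iff_ne_zero.mp hn1
      have heq : ‖nupow a n‖ = (‖nupow a n‖ ^ ((1 : ℝ) / n)) ^ n := by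
        rw [← Real.rpow_natCast (‖nupow a n‖ ^ ((1 : ℝ) / n)) n,
          ← Real.rpow_mul hr, one_div, inv_mul_cancel₀ hncast, Real.rpow_one]
      rw [heq]
      exact pow_le_pow_left₀ (Real.rpow_nonneg hr _) hn.le n
    have hnorm : Filter.Tendsto (fun n : ℕ => ‖nupow a n‖)
        Filter.atTop (nhds 0) :=
      squeeze_zero' (Filter.Eventually.of_forall fun n => norm_nonneg _) hb2
        (tendsto_pow_atTop_nhds_zero_of_lt_one (by norm_num) (by norm_num))
    have h0 : Filter.Tendsto (fun n : ℕ => nupow a n) Filter.atTop (nhds 0) :=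
      tendsto_zero_iff_norm_tendsto_zero.mpr hnorm
    have hmul : Filter.Tendsto (fun n : ℕ => a * x * nupow a n * y)
        Filter.atTop (nhds 0) := by
      have := (h0.const_mul (a * x)).mul_const y
      simpa using this
    have hshift : Filter.Tendsto (fun n : ℕ => a * x * nupow a (n + 1) * y)
        Filter.atTop (nhds 0) :=
      hmul.comp (Filter.tendsto_add_atTop_nat 1)
    have hconst : Filter.Tendsto (fun _ : ℕ => a * x * y)
        Filter.atTop (nhds 0) := by
      have he : (fun n : ℕ => a * x * nupow a (n + 1) * y)
          = fun _ : ℕ => a * x * y := funext fun n => key n y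
      rwa [he] at hshift
    exact tendsto_nhds_unique tendsto_const_nhds hconst
  · intro h
    refine ⟨?_, ?_⟩
    · have hz : ∀ n : ℕ, nupow a (n + 3) = 0 := by
        intro n
        induction n with
        | zero =>
          have : nupow a 3 = a * a * a := rfl
          rw [this, h]
        | succ k ih =>
          have : nupow a (k + 4) = nupow a (k + 3) * a := rfl
          rw [this, ih, zero_mul]
      have hev : (fun _ : ℕ => (0 : ℝ)) =ᶠ[Filter.atTop]
          fun n : ℕ => ‖nupow a n‖ ^ ((1 : ℝ) / n) := by
        filter_upwards [Filter.eventually_ge_atTop 3] with n hn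
        obtain ⟨k, rfl⟩ := Nat.exists_eq_add_of_le hn
        have e3 : 3 + k = k + 3 := by omega
        rw [e3, hz k, norm_zero, Real.zero_rpow]
        positivity
      exact Filter.Tendsto.congr' hev tendsto_const_nhds
    · intro x y
      rw [mul_assoc a x a, h, h]
end

section
/- Let A be a complex normed algebra (not necessarily unital). Then L(A) = A if and only if a*x*y = 0 for all a, x, y ∈ A (i.e. A³ = {0}). -/
/-- A complex (not necessarily unital) normed algebra `A` satisfies `L(A) = A`
if and only if `a*x*y = 0` for all `a, x, y ∈ A` (i.e. `A³ = {0}`). -/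
theorem stmt_7 {A : Type*} [NonUnitalNormedRing A] [NormedSpace ℂ A]
    [IsScalarTower ℂ A A] [SMulCommClass ℂ A A] :
    {a : A | ∀ x y : A, a * x * a * y = a * x * y} = Set.univ ↔
      ∀ a x y : A, a * x * y = 0 := by
  constructor
  · intro h a x y
    have h1 : a * x * a * y = a * x * y := (h ▸ Set.mem_univ a) x y
    have h2 := (h ▸ Set.mem_univ ((2:ℂ) • a)) x y
    simp only [smul_mul_assoc, mul_smul_comm, smul_smul] at h2
    -- h2 : (4:ℂ) • (a*x*a*y) = (2:ℂ) • (a*x*y)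
    rw [h1] at h2
    norm_num at h2
    have : ((4:ℂ) - 2) • (a * x * y) = 0 := by
      rw [sub_smul, h2, sub_self]
    norm_num at this
    exact this
  · intro h
    ext a
    simp only [Set.mem_setOf_eq, Set.mem_univ, iff_true]
    intro x y
    rw [h a x y, show a * x * a * y = (a * x) * a * y from rfl, h (a * x) a y]
end

section
/- Let A be a complex Banach algebra (not necessarily unital). Then N'₃(A) is exactly the connected component of 0 in the subspace L(A). -/
open Metric Set Filter

/-- In a complex (not necessarily unital) Banach algebra `A`, `N'₃(A)` is exactly
the connected component of `0` in the subspace `L(A)`. -/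
theorem stmt_9 {A : Type*} [NonUnitalNormedRing A] [NormedSpace ℂ A]
    [IsScalarTower ℂ A A] [SMulCommClass ℂ A A] [CompleteSpace A] :
    {a : A | ∀ x y : A, a * x * y = 0} =
      connectedComponentIn {a : A | ∀ x y : A, a * x * a * y = a * x * y} 0 := by
  set N : Set A := {a | ∀ x y : A, a * x * y = 0} with hNdef
  set L : Set A := {a | ∀ x y : A, a * x * a * y = a * x * y} with hLdef
  have hNL : N ⊆ L := by
    intro a ha x y
    have h1 : a * (x * a) * y = 0 := ha (x * a) y
    rw [← mul_assoc] at h1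
    rw [h1, ha x y]
  have h0N : (0 : A) ∈ N := by intro x y; simp
  have h0L : (0 : A) ∈ L := hNL h0N
  -- key lemma : if a ∈ N, b ∈ L, ‖b - a‖ < 1 then b ∈ N
  have key : ∀ a ∈ N, ∀ b ∈ L, ‖b - a‖ < 1 → b ∈ N := by
    intro a ha b hb hab x y
    set c := b - a with hc
    set f : A → A := fun z => c * z with hf
    have hfn : ∀ m : ℕ, ∀ z : A, ‖f^[m] z‖ ≤ ‖c‖ ^ m * ‖z‖ := by
      intro m
      induction m with
      | zero => intro z; simp
      | succ m ih =>
        intro z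
        rw [Function.iterate_succ_apply]
        calc ‖f^[m] (f z)‖ ≤ ‖c‖ ^ m * ‖f z‖ := ih _
          _ ≤ ‖c‖ ^ m * (‖c‖ * ‖z‖) := by
              gcongr
              exact norm_mul_le _ _
          _ = ‖c‖ ^ (m + 1) * ‖z‖ := by ring
    have hP : ∀ m : ℕ, ∀ y : A, b * x * y = b * x * f^[m] (b * y) := by
      intro m
      induction m with
      | zero =>
        intro y
        simp only [Function.iterate_zero, id]
        rw [← mul_assoc]
        exact (hb x y).symm
      | succ m ih =>
        intro y
        have hbb : b * (b * y) = c * (b * y) := by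
          have h1 : a * (b * y) = 0 := by rw [← mul_assoc]; exact ha b y
          calc b * (b * y) = (c + a) * (b * y) := by rw [hc, sub_add_cancel]
            _ = c * (b * y) + a * (b * y) := by rw [add_mul]
            _ = c * (b * y) := by rw [h1, add_zero]
        have h2 := ih (b * y)
        rw [Function.iterate_succ_apply]
        have h3 : f (b * y) = c * (b * y) := rfl
        rw [h3, ← hbb, ← h2]
        have h4 : b * x * (b * y) = b * x * y := by
          rw [← mul_assoc]; exact hb x y
        rw [h4]
    have hbxy : ∀ m : ℕ, ‖b * x * y‖ ≤ ‖b * x‖ * ‖b * y‖ * ‖c‖ ^ m := by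
      intro m
      calc ‖b * x * y‖ = ‖b * x * f^[m] (b * y)‖ := by rw [← hP m y]
        _ ≤ ‖b * x‖ * ‖f^[m] (b * y)‖ := norm_mul_le _ _
        _ ≤ ‖b * x‖ * (‖c‖ ^ m * ‖b * y‖) := by
            gcongr
            exact hfn m _
        _ = ‖b * x‖ * ‖b * y‖ * ‖c‖ ^ m := by ring
    have hc1 : ‖c‖ < 1 := hab
    have htend : Tendsto (fun m : ℕ => ‖b * x‖ * ‖b * y‖ * ‖c‖ ^ m) atTop (nhds 0) := by
      have := tendsto_pow_atTop_nhds_zero_of_lt_one (norm_nonneg c) hc1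
      simpa using this.const_mul (‖b * x‖ * ‖b * y‖)
    have : ‖b * x * y‖ ≤ 0 := ge_of_tendsto' htend hbxy
    exact norm_le_zero_iff.mp this
  -- N is closed
  have hNclosed : IsClosed N := by
    have : N = ⋂ (x : A) (y : A), {a : A | a * x * y = 0} := by
      ext a; simp [hNdef, Set.mem_iInter]
    rw [this]
    refine isClosed_iInter fun x => isClosed_iInter fun y => ?_
    exact isClosed_eq (by fun_prop) continuous_const
  -- N is convex hence preconnected
  have hNconv : Convex ℝ N := by
    intro p hp q hq s t hs ht hst
    intro x y
    show (s • p + t • q) * x * y = 0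
    rw [add_mul, add_mul, smul_mul_assoc, smul_mul_assoc, smul_mul_assoc, smul_mul_assoc,
      hp x y, hq x y, smul_zero, smul_zero, add_zero]
  have hNpre : IsPreconnected N := hNconv.isPreconnected
  apply Set.Subset.antisymm
  · exact hNpre.subset_connectedComponentIn h0N hNL
  · -- connected component of 0 in L is contained in N
    set C := connectedComponentIn L 0 with hC
    have hCpre : IsPreconnected C := isPreconnected_connectedComponentIn
    have hCL : C ⊆ L := connectedComponentIn_subset L 0
    have h0C : (0 : A) ∈ C := mem_connectedComponentIn h0L
    by_contra hcon
    have hV : (C ∩ Nᶜ).Nonempty := by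
      rw [Set.not_subset] at hcon
      obtain ⟨z, hz1, hz2⟩ := hcon
      exact ⟨z, hz1, hz2⟩
    set U : Set A := ⋃ a ∈ N, Metric.ball a 1 with hU
    have hUopen : IsOpen U := isOpen_biUnion fun a _ => isOpen_ball
    have hVopen : IsOpen (Nᶜ) := hNclosed.isOpen_compl
    have hcover : C ⊆ U ∪ Nᶜ := by
      intro z hz
      by_cases h : z ∈ N
      · left
        exact Set.mem_biUnion h (by simp [Metric.mem_ball])
      · right; exact h
    have hCU : (C ∩ U).Nonempty :=
      ⟨0, h0C, Set.mem_biUnion h0N (by simp [Metric.mem_ball])⟩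
    obtain ⟨z, hzC, hzU, hzV⟩ := hCpre U (Nᶜ) hUopen hVopen hcover hCU hV
    obtain ⟨a, haN, hza⟩ := Set.mem_iUnion₂.mp hzU
    have : z ∈ N := key a haN z (hCL hzC) (by rw [← dist_eq_norm]; exact Metric.mem_ball.mp hza)
    exact hzV this
end

section
/- Let A be a complex Banach algebra (not necessarily unital) and set Q(A) := L(A) \ N'₃(A). If Q(A) ≠ ∅, then ‖a − b‖ ≥ 1 for every a ∈ N'₃(A) and b ∈ Q(A), so the distance d(N'₃(A), Q(A)) := inf{‖a − b‖ : a ∈ N'₃(A), b ∈ Q(A)} is at least 1. Moreover, the subspace L(A) is disconnected if and only if Q(A) ≠ ∅. -/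
/-- Key separation lemma: if `a ∈ N'₃(A)` and `b ∈ L(A) \ N'₃(A)` then `‖a - b‖ ≥ 1`. -/
lemma stmt_11_key {A : Type*} [NonUnitalNormedRing A]
    {a b : A} (ha : ∀ x y : A, a * x * y = 0)
    (hbL : ∀ x y : A, b * x * b * y = b * x * y)
    (hbN : ¬ ∀ x y : A, b * x * y = 0) :
    1 ≤ ‖a - b‖ := by
  by_contra hlt
  push_neg at hlt
  set c := b - a with hc
  have hcn : ‖c‖ < 1 := by rw [hc, norm_sub_rev]; exact hlt
  -- find x with b*x ∉ N
  have hux : ∃ x, ¬ ∀ x' y' : A, b * x * x' * y' = 0 := by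
    by_contra hall
    push_neg at hall
    apply hbN
    intro x y
    rw [← hbL x y]
    exact hall x b y
  obtain ⟨x, hx⟩ := hux
  push_neg at hx
  obtain ⟨p, q, hpq⟩ := hx
  set u := b * x with hu
  -- u * b * y = u * y
  have hub : ∀ y : A, u * b * y = u * y := fun y => hbL x y
  -- (u * a) * x' * y' = 0
  have hua : ∀ x' y' : A, u * a * x' * y' = 0 := by
    intro x' y'
    have h0 : a * (x' * y') = 0 := by rw [← mul_assoc]; exact ha x' y'
    simp only [mul_assoc, h0, mul_zero]
  -- main induction
  have main : ∀ n : ℕ, ∃ v : A, (∀ x' y' : A, v * x' * y' = u * x' * y') ∧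
      ‖v‖ ≤ ‖u‖ * ‖c‖ ^ n := by
    intro n
    induction n with
    | zero => exact ⟨u, fun _ _ => rfl, by simp⟩
    | succ n ih =>
      obtain ⟨v, hv, hvn⟩ := ih
      refine ⟨v * c, ?_, ?_⟩
      · intro x' y'
        have hvb : v * b * x' * y' = u * x' * y' := by
          have h1 : v * b * x' * y' = v * (b * x') * y' := by rw [mul_assoc v b x']
          have h2 : u * (b * x') * y' = u * b * x' * y' := by rw [mul_assoc u b x']
          rw [h1, hv (b * x') y', h2, hub x']
        have hva : v * a * x' * y' = 0 := by
          have h1 : v * a * x' * y' = v * (a * x') * y' := by rw [mul_assoc v a x']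
          have h2 : u * (a * x') * y' = u * a * x' * y' := by rw [mul_assoc u a x']
          rw [h1, hv (a * x') y', h2, hua]
        have : v * c = v * b - v * a := by rw [hc, mul_sub]
        rw [this, sub_mul, sub_mul, hvb, hva, sub_zero]
      · calc ‖v * c‖ ≤ ‖v‖ * ‖c‖ := norm_mul_le _ _
          _ ≤ ‖u‖ * ‖c‖ ^ n * ‖c‖ := by
              exact mul_le_mul_of_nonneg_right hvn (norm_nonneg c)
          _ = ‖u‖ * ‖c‖ ^ (n + 1) := by ring
  -- bound on ‖u * p * q‖
  have hbound : ∀ n : ℕ, ‖u * p * q‖ ≤ ‖u‖ * ‖p‖ * ‖q‖ * ‖c‖ ^ n := by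
    intro n
    obtain ⟨v, hv, hvn⟩ := main n
    rw [← hv p q]
    calc ‖v * p * q‖ ≤ ‖v * p‖ * ‖q‖ := norm_mul_le _ _
      _ ≤ ‖v‖ * ‖p‖ * ‖q‖ := by
          exact mul_le_mul_of_nonneg_right (norm_mul_le _ _) (norm_nonneg q)
      _ ≤ ‖u‖ * ‖c‖ ^ n * ‖p‖ * ‖q‖ := by
          have := mul_le_mul_of_nonneg_right
            (mul_le_mul_of_nonneg_right hvn (norm_nonneg p)) (norm_nonneg q)
          linarith
      _ = ‖u‖ * ‖p‖ * ‖q‖ * ‖c‖ ^ n := by ring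
  have htend : Filter.Tendsto (fun n : ℕ => ‖u‖ * ‖p‖ * ‖q‖ * ‖c‖ ^ n)
      Filter.atTop (nhds 0) := by
    have h0 : Filter.Tendsto (fun n : ℕ => ‖c‖ ^ n) Filter.atTop (nhds 0) :=
      tendsto_pow_atTop_nhds_zero_of_lt_one (norm_nonneg c) hcn
    simpa using h0.const_mul (‖u‖ * ‖p‖ * ‖q‖)
  have hle : ‖u * p * q‖ ≤ 0 :=
    ge_of_tendsto htend (Filter.Eventually.of_forall hbound)
  exact hpq (norm_le_zero_iff.mp hle)

/-- Let `A` be a complex (not necessarily unital) Banach algebra, `L(A)` its set of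
endomorphic left elements, `N'₃(A) = {a | a*x*y = 0 ∀ x y}`, and
`Q(A) = L(A) \ N'₃(A)`. If `Q(A) ≠ ∅`, then `‖a − b‖ ≥ 1` for all `a ∈ N'₃(A)`,
`b ∈ Q(A)`, so `d(N'₃(A), Q(A)) ≥ 1`. Moreover `L(A)` is disconnected as a subspace
iff `Q(A) ≠ ∅`. -/
theorem stmt_11 {A : Type*} [NonUnitalNormedRing A] [NormedSpace ℂ A]
    [IsScalarTower ℂ A A] [SMulCommClass ℂ A A] [CompleteSpace A]
    {L N Q : Set A}
    (hL : L = {a : A | ∀ x y : A, a * x * a * y = a * x * y})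
    (hN : N = {a : A | ∀ x y : A, a * x * y = 0})
    (hQ : Q = L \ N) :
    (Q.Nonempty →
      (∀ a ∈ N, ∀ b ∈ Q, 1 ≤ ‖a - b‖) ∧
        1 ≤ sInf {d : ℝ | ∃ a ∈ N, ∃ b ∈ Q, d = ‖a - b‖}) ∧
    (¬ IsPreconnected L ↔ Q.Nonempty) := by
  subst hL hN hQ
  set N : Set A := {a : A | ∀ x y : A, a * x * y = 0} with hN
  set L : Set A := {a : A | ∀ x y : A, a * x * a * y = a * x * y} with hL
  have key : ∀ a ∈ N, ∀ b ∈ L \ N, 1 ≤ ‖a - b‖ := by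
    intro a ha b hb
    exact stmt_11_key ha hb.1 hb.2
  have hNL : N ⊆ L := by
    intro a ha
    intro x y
    rw [ha x y, mul_assoc a x a]
    exact ha (x * a) y
  have h0N : (0 : A) ∈ N := by intro x y; simp
  constructor
  · intro hQne
    refine ⟨key, ?_⟩
    obtain ⟨b, hb⟩ := hQne
    apply le_csInf
    · exact ⟨‖(0 : A) - b‖, 0, h0N, b, hb, rfl⟩
    · rintro d ⟨a, ha, b', hb', rfl⟩
      exact key a ha b' hb'
  · constructor
    · -- disconnected → Q nonempty (contrapositive)
      intro hnc
      by_contra hQe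
      apply hnc
      rw [Set.not_nonempty_iff_eq_empty, Set.diff_eq_empty] at hQe
      have hLN : L = N := le_antisymm hQe hNL
      rw [hLN]
      -- N is star-shaped w.r.t. 0, hence preconnected
      apply isPreconnected_of_forall (0 : A)
      intro y hy
      refine ⟨(fun r : ℝ => ((r : ℂ)) • y) '' Set.Icc 0 1, ?_, ?_, ?_, ?_⟩
      · rintro _ ⟨r, _, rfl⟩
        intro x' y'
        rw [smul_mul_assoc, smul_mul_assoc, hy x' y', smul_zero]
      · exact ⟨0, by simp, by simp⟩
      · exact ⟨1, by simp, by simp⟩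
      · exact (isPreconnected_Icc).image _
          ((Complex.continuous_ofReal.smul continuous_const).continuousOn)
    · -- Q nonempty → disconnected
      rintro ⟨b, hbQ⟩ hpc
      set U : Set A := ⋃ a ∈ N, Metric.ball a 1 with hU
      set V : Set A := ⋃ q ∈ (L \ N), Metric.ball q 1 with hV
      have hUo : IsOpen U := isOpen_biUnion fun _ _ => Metric.isOpen_ball
      have hVo : IsOpen V := isOpen_biUnion fun _ _ => Metric.isOpen_ball
      have hcover : L ⊆ U ∪ V := by
        intro z hz
        by_cases hzN : z ∈ N
        · exact Or.inl (Set.mem_biUnion hzN (by simp [Metric.mem_ball]))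
        · exact Or.inr (Set.mem_biUnion ⟨hz, hzN⟩ (by simp [Metric.mem_ball]))
      have hLU : (L ∩ U).Nonempty :=
        ⟨0, hNL h0N, Set.mem_biUnion h0N (by simp [Metric.mem_ball])⟩
      have hLV : (L ∩ V).Nonempty :=
        ⟨b, hbQ.1, Set.mem_biUnion hbQ (by simp [Metric.mem_ball])⟩
      obtain ⟨z, hzL, hzU, hzV⟩ := hpc U V hUo hVo hcover hLU hLV
      obtain ⟨a, haN, hza⟩ := Set.mem_iUnion₂.mp hzU
      obtain ⟨q, hqQ, hzq⟩ := Set.mem_iUnion₂.mp hzV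
      rw [Metric.mem_ball] at hza hzq
      by_cases hzN : z ∈ N
      · have h1 := key z hzN q hqQ
        rw [dist_eq_norm] at hzq
        linarith
      · have h1 := key a haN z ⟨hzL, hzN⟩
        rw [dist_eq_norm, ← norm_sub_rev] at hza
        linarith
end

section
/- Let A be a (not necessarily unital) normed algebra and suppose a, b ∈ L(A) with a*b = b*a, b³ ≠ a, and a ∈ I(A). Then ‖a − b‖ ≥ 1. -/
/-- In a (not necessarily unital) normed algebra `A`, if `a, b ∈ L(A)` commute,
`b³ ≠ a`, and `a` is idempotent, then `‖a − b‖ ≥ 1`. -/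
theorem stmt_12 {A : Type*} [NonUnitalNormedRing A] (a b : A)
    (ha : ∀ x y : A, a * x * a * y = a * x * y)
    (hb : ∀ x y : A, b * x * b * y = b * x * y)
    (hab : a * b = b * a) (hb3 : b * b * b ≠ a) (haI : a * a = a) :
    1 ≤ ‖a - b‖ := by
  have hC : Commute a b := hab
  set q := b * b * b with hqdef
  have hb4 : b * b * b * b = b * b * b := hb b b
  have hqq : q * q = q := by
    show b*b*b*(b*b*b) = b*b*b
    simp only [← mul_assoc]
    rw [hb4, hb4, hb4]
  have hCq : Commute a q := (hC.mul_right hC).mul_right hC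
  have eq2 : q * a = a * q := hCq.eq.symm
  have e4 : a * q * a = a * q := by
    rw [mul_assoc a q a, eq2, ← mul_assoc, haI]
  have e5 : a * q * q = a * q := by rw [mul_assoc, hqq]
  -- pointwise: a*b*b*z = a*b*z
  have h1 : ∀ z, a * b * b * z = a * b * z := by
    intro z
    have h := hb a z
    rw [← hab] at h
    exact h
  have e2 : b * a = a * b := hab.symm
  have e1 : a * b * a = a * b := by
    rw [mul_assoc a b a, e2, ← mul_assoc, haI]
  have e7 : b * b * a = a * b * b := by
    rw [mul_assoc b b a, e2, ← mul_assoc b a b, e2]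
  -- (a-q)^3 = a-q
  have hd3 : (a - q) * ((a - q) * (a - q)) = a - q := by
    have h : (a-q)*((a-q)*(a-q)) =
        a*a*a - a*a*q - a*q*a + a*q*q - q*a*a + q*a*q + q*q*a - q*q*q := by
      noncomm_ring
    rw [h]
    simp only [haI, hqq, e4, e5, eq2]
    abel
  -- pointwise: (a-q)*z = (a-b)*((a-b)*((a-b)*z))
  have hkey : ∀ z : A, (a - q) * z = (a-b)*((a-b)*((a-b)*z)) := by
    intro z
    have h : (a-b)*((a-b)*((a-b)*z)) =
        a*a*a*z - a*a*b*z - a*b*a*z + a*b*b*z - b*a*a*z + b*a*b*z + b*b*a*z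
          - b*b*b*z := by
      noncomm_ring
    rw [h]
    simp only [e1, e2, e7, haI, h1]
    rw [hqdef]
    noncomm_ring
  have step : a - q = (a-b)*((a-b)*((a-b)*((a-b)*((a-b)*((a-b)*(a-q)))))) := by
    calc a - q = (a-q)*((a-q)*(a-q)) := hd3.symm
      _ = (a-b)*((a-b)*((a-b)*((a-q)*(a-q)))) := hkey _
      _ = (a-b)*((a-b)*((a-b)*((a-b)*((a-b)*((a-b)*(a-q)))))) := by
          rw [hkey (a-q)]
  have h6 : ∀ x : A, ‖(a-b)*x‖ ≤ ‖a-b‖ * ‖x‖ := fun x => norm_mul_le _ _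
  have hn : ‖a - q‖ ≤ ‖a-b‖*(‖a-b‖*(‖a-b‖*(‖a-b‖*(‖a-b‖*(‖a-b‖*‖a-q‖))))) := by
    conv_lhs => rw [step]
    refine (h6 _).trans ?_
    gcongr
    refine (h6 _).trans ?_
    gcongr
    refine (h6 _).trans ?_
    gcongr
    refine (h6 _).trans ?_
    gcongr
    refine (h6 _).trans ?_
    gcongr
    exact h6 _
  have hn' : ‖a - q‖ ≤ ‖a-b‖^6 * ‖a-q‖ := hn.trans_eq (by ring)
  have hne : a - q ≠ 0 := sub_ne_zero_of_ne (Ne.symm hb3)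
  have ht : 0 < ‖a - q‖ := norm_pos_iff.mpr hne
  by_contra hlt
  push_neg at hlt
  have hp : ‖a-b‖^6 < 1 := pow_lt_one₀ (norm_nonneg _) hlt (by norm_num)
  nlinarith
end

section
/- Let A be a complex Banach algebra (not necessarily unital) and a ∈ L(A). Then a is an isolated point of L(A) (in the norm topology of A) if and only if a ∈ I(A), a lies in the center of A (a*x = x*a for all x ∈ A), and every b ∈ L(A) with b³ = a satisfies b = a. -/
/-- In a complex (not necessarily unital) Banach algebra `A`, an element `a ∈ L(A)`
is isolated in `L(A)` iff `a` is idempotent, central, and every `b ∈ L(A)` with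
`b³ = a` equals `a`. -/
theorem stmt_13 {A : Type*} [NonUnitalNormedRing A] [NormedSpace ℂ A]
    [IsScalarTower ℂ A A] [SMulCommClass ℂ A A] [CompleteSpace A]
    {L : Set A}
    (hL : L = {a : A | ∀ x y : A, a * x * a * y = a * x * y})
    (a : A) (haL : a ∈ L) :
    (∃ ε > (0 : ℝ), ∀ b ∈ L, ‖b - a‖ < ε → b = a) ↔
      (a * a = a ∧ (∀ x : A, a * x = x * a) ∧
        ∀ b ∈ L, b * b * b = a → b = a) := by
  subst hL
  have h1 : ∀ x y : A, a * x * a * y = a * x * y := haL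
  constructor
  · rintro ⟨ε, hε, hiso⟩
    -- key perturbation lemma
    have key : ∀ d : A, (∀ x y : A, a * x * d * y = 0) →
        (∀ x y : A, d * x * a * y = d * x * y) →
        (∀ x y : A, d * x * d * y = 0) → d = 0 := by
      intro d h0 hA hd
      by_contra hd0
      have hdn : (0:ℝ) < ‖d‖ := norm_pos_iff.mpr hd0
      set t : ℝ := ε / (2 * ‖d‖) with ht
      have ht0 : 0 < t := by positivity
      have hmem : ∀ x y : A,
          (a + (t:ℂ) • d) * x * (a + (t:ℂ) • d) * y = (a + (t:ℂ) • d) * x * y := by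
        intro x y
        simp only [add_mul, mul_add, smul_mul_assoc, mul_smul_comm, smul_smul,
          h1, h0, hA, hd, smul_zero, add_zero, zero_add]
      have hnorm : ‖(a + (t:ℂ) • d) - a‖ < ε := by
        rw [add_sub_cancel_left, norm_smul, Complex.norm_real,
          Real.norm_of_nonneg ht0.le]
        have hteq : t * ‖d‖ = ε / 2 := by
          rw [ht]; field_simp
        rw [hteq]; linarith
      have heq := hiso _ hmem hnorm
      have h2 : (t:ℂ) • d = 0 := by
        have := add_eq_left.mp heq
        exact this
      rcases smul_eq_zero.mp h2 with h | h
      · exact (Complex.ofReal_ne_zero.mpr ht0.ne') h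
      · exact hd0 h
    -- N = 0
    have hN : ∀ c : A, (∀ x : A, c * x = 0) → c = 0 := by
      intro c hc
      apply key c
      · intro x y; rw [mul_assoc, hc y, mul_zero]
      · intro x y; rw [hc x]; simp
      · intro x y; rw [hc x]; simp
    have h1e : ∀ x : A, a * x * a = a * x := by
      intro x
      exact sub_eq_zero.mp (hN (a * x * a - a * x)
        (fun z => by rw [sub_mul, h1]; exact sub_self _))
    -- idempotency
    have haa : ∀ x : A, a * x * (a * a) = a * x := by
      intro x; rw [← mul_assoc, h1e, h1e]
    have haax : ∀ x : A, a * a * x * a = a * a * x := by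
      intro x; rw [mul_assoc a a x, h1e]
    have hIdem : a * a = a := by
      apply sub_eq_zero.mp
      apply key (a * a - a)
      · intro x y; rw [mul_sub, haa, h1e, sub_self, zero_mul]
      · intro x y; simp only [sub_mul, haax, h1e]
      · intro x y
        simp only [sub_mul, mul_sub, mul_assoc a a x, haa, h1e]
        simp
    -- centrality
    have hwxa : ∀ u x : A, u * a * x * a = u * a * x := by
      intro u x; rw [mul_assoc u a x, mul_assoc u (a*x) a, h1e]
    have hawxa : ∀ u x : A, a * (u * a) * x * a = a * (u * a) * x := by
      intro u x; rw [← mul_assoc a u a]; exact hwxa (a*u) x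
    have hE : ∀ x w : A, a * x * (a * w) = a * x * w := by
      intro x w; rw [← mul_assoc, h1e]
    have hPxQ : ∀ z x : A, z * a * x * (a * (z * a)) = z * a * x * (z * a) := by
      intro z x; rw [← mul_assoc, hwxa]
    have hQxQ : ∀ z x : A, a * (z * a) * x * (a * (z * a)) = a * (z * a) * x * (z * a) := by
      intro z x; rw [← mul_assoc, hawxa]
    have hzaa : ∀ z : A, z * a = a * (z * a) := by
      intro z
      apply sub_eq_zero.mp
      apply key (z * a - a * (z * a))
      · intro x y; rw [mul_sub, hE, sub_self, zero_mul]
      · intro x y; simp only [sub_mul, hwxa, hawxa]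
      · intro x y
        simp only [sub_mul, mul_sub, hPxQ, hQxQ]
        simp
    have hZ : ∀ x : A, a * x = x * a := by
      intro z; rw [hzaa z, ← mul_assoc, h1e]
    refine ⟨hIdem, hZ, ?_⟩
    -- cube roots
    intro b hb hb3
    have hb' : ∀ x y : A, b * x * b * y = b * x * y := hb
    have hb1e : ∀ x : A, b * x * b = b * x := by
      intro x
      exact sub_eq_zero.mp (hN (b * x * b - b * x)
        (fun z => by rw [sub_mul, hb']; exact sub_self _))
    have h3 : ∀ x : A, (b * b * b) * x = b * (b * (b * x)) := by
      intro x; rw [mul_assoc, mul_assoc]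
    have haxb : ∀ x : A, a * x * b = a * x := by
      intro x; rw [← hb3, h3, hb1e]
    have hbxa : ∀ x : A, b * x * a = b * x := by
      intro x; rw [← hb3, ← mul_assoc, ← mul_assoc, hb1e, hb1e, hb1e]
    apply sub_eq_zero.mp
    apply key (b - a)
    · intro x y; rw [mul_sub, haxb, h1e, sub_self, zero_mul]
    · intro x y; simp only [sub_mul, hbxa, h1e]
    · intro x y
      simp only [sub_mul, mul_sub, hbxa, h1e, haxb, hb1e]
      simp
  · rintro ⟨hIdem, hZ, hCube⟩
    refine ⟨(‖a‖ + 1)⁻¹, by positivity, ?_⟩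
    intro b hb hbn
    have hb' : ∀ x y : A, b * x * b * y = b * x * y := hb
    -- N = 0
    have hN : ∀ c : A, (∀ x : A, c * x = 0) → c = 0 := by
      intro c hc
      have hmem : ∀ x y : A, (a + c) * x * (a + c) * y = (a + c) * x * y := by
        intro x y
        simp only [add_mul, mul_add]
        rw [hc x, mul_assoc (a*x) c y, hc y, h1]
        simp
      have hsq : (a + c) * (a + c) = a := by
        rw [mul_add, add_mul, add_mul, hIdem, hc a, hc c, hZ c, hc a]
        simp
      have hcu : (a + c) * (a + c) * (a + c) = a := by
        rw [hsq, mul_add, hIdem, hZ c, hc a, add_zero]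
      have := hCube (a + c) hmem hcu
      have h2 : c = 0 := by
        have := add_eq_left.mp this
        exact this
      exact h2
    have h1e : ∀ x : A, a * x * a = a * x := by
      intro x
      exact sub_eq_zero.mp (hN (a * x * a - a * x)
        (fun z => by rw [sub_mul, h1]; exact sub_self _))
    have hb1e : ∀ x : A, b * x * b = b * x := by
      intro x
      exact sub_eq_zero.mp (hN (b * x * b - b * x)
        (fun z => by rw [sub_mul, hb']; exact sub_self _))
    have hapos : (0:ℝ) < ‖a‖ + 1 := by positivity
    -- a * b = a
    have haba : a * b * a = a * b := by rw [← hZ, ← mul_assoc, hIdem]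
    have habb : a * b * b = a * b := by rw [hZ b]; exact hb1e a
    have habab : a * b * (a * b) = a * b := by rw [← mul_assoc, haba, habb]
    have haab : a * (a * b) = a * b := by rw [← mul_assoc, hIdem]
    have hp : (a - a * b) * (a - a * b) = a - a * b := by
      rw [sub_mul, mul_sub, mul_sub, hIdem, haab, haba, habab, sub_self, sub_zero]
    have hnp : ‖a - a * b‖ < 1 := by
      have e1 : ‖a - a * b‖ = ‖a * (a - b)‖ := by rw [mul_sub, hIdem]
      have e2 : ‖a * (a - b)‖ ≤ ‖a‖ * ‖a - b‖ := norm_mul_le _ _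
      have e3 : ‖a - b‖ = ‖b - a‖ := norm_sub_rev _ _
      have e4 : ‖b - a‖ * (‖a‖ + 1) < 1 := by
        have := mul_lt_mul_of_pos_right hbn hapos
        rwa [inv_mul_cancel₀ hapos.ne'] at this
      nlinarith [norm_nonneg a, norm_nonneg (b - a)]
    have hpz : a - a * b = 0 := by
      have e1 : ‖a - a * b‖ ≤ ‖a - a * b‖ * ‖a - a * b‖ := by
        calc ‖a - a * b‖ = ‖(a - a * b) * (a - a * b)‖ := by rw [hp]
          _ ≤ ‖a - a * b‖ * ‖a - a * b‖ := norm_mul_le _ _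
      have : ‖a - a * b‖ = 0 := le_antisymm (by nlinarith [norm_nonneg (a - a*b)]) (norm_nonneg _)
      exact norm_eq_zero.mp this
    have hab : a * b = a := (sub_eq_zero.mp hpz).symm
    have hba : b * a = a := by rw [← hZ]; exact hab
    have hda : (b - a) * a = 0 := by rw [sub_mul, hba, hIdem, sub_self]
    have hdxa : ∀ x : A, (b - a) * x * a = 0 := by
      intro x; rw [mul_assoc, ← hZ x, ← mul_assoc, hda, zero_mul]
    have haxb : ∀ x : A, a * x * b = a * x := by
      intro x; rw [hZ x, mul_assoc, hab]
    have hdxb : ∀ x : A, (b - a) * x * b = (b - a) * x := by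
      intro x; simp only [sub_mul, hb1e, haxb]
    have hdd : ∀ x : A, (b - a) * x = (b - a) * x * (b - a) := by
      intro x
      have : (b - a) * x * (b - a) = (b - a) * x := by
        rw [mul_sub, hdxb, hdxa, sub_zero]
      exact this.symm
    have hd1 : ‖b - a‖ < 1 := by
      have : (‖a‖ + 1)⁻¹ ≤ 1 := by
        rw [inv_le_one_iff₀]
        right; linarith [norm_nonneg a]
      linarith
    have hdx0 : ∀ x : A, (b - a) * x = 0 := by
      intro x
      have e1 : ‖(b - a) * x‖ ≤ ‖(b - a) * x‖ * ‖b - a‖ := by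
        calc ‖(b - a) * x‖ = ‖(b - a) * x * (b - a)‖ := by rw [← hdd]
          _ ≤ ‖(b - a) * x‖ * ‖b - a‖ := norm_mul_le _ _
      have : ‖(b - a) * x‖ = 0 :=
        le_antisymm (by nlinarith [norm_nonneg ((b - a) * x)]) (norm_nonneg _)
      exact norm_eq_zero.mp this
    exact sub_eq_zero.mp (hN (b - a) hdx0)
end

section
/- Let A be a complex Banach algebra (not necessarily unital). Then every connected component of the subspace L(A) is either a singleton or unbounded in norm. -/
set_option linter.unusedSectionVars false

section StmtAux

variable {A : Type*} [NonUnitalNormedRing A]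

/-! ### Purely algebraic identities -/

private lemma aux_hc' {c : A} (hc : ∀ x y : A, c * x * c * y = c * x * y) :
    ∀ x y : A, c * (x * (c * y)) = c * (x * y) := by
  intro x y
  have := hc x y
  simpa [mul_assoc] using this

private lemma aux_e1_H1 {c : A} (hc : ∀ x y : A, c * x * c * y = c * x * y) (u : A) :
    ∀ x y : A, c * x * (c * u * c - c * u) * y = 0 := by
  intro x y
  have hc' := aux_hc' hc
  have h2 : c * (x * (u * (c * y))) = c * (x * (u * y)) := by
    have := hc' (x * u) y
    simpa [mul_assoc] using this
  have : c * x * (c * u * c - c * u) * y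
      = c * (x * (c * (u * (c * y)))) - c * (x * (c * (u * y))) := by
    simp [mul_sub, sub_mul, mul_assoc]
  rw [this, hc' x (u * (c * y)), hc' x (u * y), h2, sub_self]

private lemma aux_e1_zero {c : A} (hc : ∀ x y : A, c * x * c * y = c * x * y) (u : A) :
    ∀ x z : A, (c * u * c - c * u) * x * z = 0 := by
  intro x z
  have hc' := aux_hc' hc
  have : (c * u * c - c * u) * x * z
      = c * (u * (c * (x * z))) - c * (u * (x * z)) := by
    simp [mul_sub, sub_mul, mul_assoc]
  rw [this, hc' u (x * z), sub_self]

private lemma aux_e2_H1 {c : A} (hc : ∀ x y : A, c * x * c * y = c * x * y) (u : A) :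
    ∀ x y : A, c * x * (c * u * c - u * c) * y = 0 := by
  intro x y
  have hc' := aux_hc' hc
  have : c * x * (c * u * c - u * c) * y
      = c * (x * (c * (u * (c * y)))) - c * (x * (u * (c * y))) := by
    simp [mul_sub, sub_mul, mul_assoc]
  rw [this, hc' x (u * (c * y)), sub_self]

private lemma aux_e2_H2 {c : A} (hc : ∀ x y : A, c * x * c * y = c * x * y) (u : A) :
    ∀ x y : A, (c * u * c - u * c) * x * c * y = (c * u * c - u * c) * x * y := by
  intro x y
  have hc' := aux_hc' hc
  have l1 : (c * u * c - u * c) * x * c * y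
      = c * (u * (c * (x * (c * y)))) - u * (c * (x * (c * y))) := by
    simp [mul_sub, sub_mul, mul_assoc]
  have r1 : (c * u * c - u * c) * x * y
      = c * (u * (c * (x * y))) - u * (c * (x * y)) := by
    simp [mul_sub, sub_mul, mul_assoc]
  rw [l1, r1, hc' u (x * (c * y)), hc' u (x * y), hc' x y]
  have : c * (u * (x * (c * y))) = c * (u * (x * y)) := by
    have := hc' (u * x) y
    simpa [mul_assoc] using this
  rw [this]

private lemma aux_e2_H3 {c : A} (hc : ∀ x y : A, c * x * c * y = c * x * y) (u : A) :
    ∀ x y : A, (c * u * c - u * c) * x * (c * u * c - u * c) * y = 0 := by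
  intro x y
  have H2 := aux_e2_H2 hc u
  have H2' : ∀ x z : A, (c * u * c - u * c) * x * (c * z)
      = (c * u * c - u * c) * x * z := by
    intro x z
    have := H2 x z
    simpa [mul_assoc] using this
  have expand : (c * u * c - u * c) * x * (c * u * c - u * c) * y
      = (c * u * c - u * c) * x * (c * (u * (c * y)))
        - (c * u * c - u * c) * x * (u * (c * y)) := by
    simp [mul_sub, sub_mul, mul_assoc]
  rw [expand, H2' x (u * (c * y)), sub_self]

private lemma aux_key {b c : A}
    (hbl : ∀ u : A, b * u * b = b * u) (hbr : ∀ u : A, b * u * b = u * b)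
    (hcl : ∀ u : A, c * u * c = c * u) (hcr : ∀ u : A, c * u * c = u * c) :
    ∀ v : A, (v * (b - c)) * ((b - c) * (b - c)) = v * (b - c) := by
  intro v
  have comm_b : ∀ w : A, b * w = w * b := fun w => (hbl w).symm.trans (hbr w)
  have comm_c : ∀ w : A, c * w = w * c := fun w => (hcl w).symm.trans (hcr w)
  have sq_b : ∀ w : A, w * b * b = w * b := by
    intro w
    calc w * b * b = b * w * b := by rw [comm_b w]
      _ = w * b := hbr w
  have sq_c : ∀ w : A, w * c * c = w * c := by
    intro w
    calc w * c * c = c * w * c := by rw [comm_c w]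
      _ = w * c := hcr w
  have hbc : b * c = c * b := comm_b c
  have swap : ∀ w : A, w * c * b = w * b * c := by
    intro w
    rw [mul_assoc, ← hbc, ← mul_assoc]
  simp only [mul_sub, sub_mul, ← mul_assoc, sq_b, sq_c, swap]
  abel

private lemma aux_ann {b c : A}
    (key : ∀ v : A, (v * (b - c)) * ((b - c) * (b - c)) = v * (b - c))
    (hlt : ‖b - c‖ < 1) : ∀ v : A, v * (b - c) = 0 := by
  intro v
  set d := b - c with hd
  have h1 : ‖v * d‖ ≤ ‖v * d‖ * (‖d‖ * ‖d‖) := by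
    calc ‖v * d‖ = ‖(v * d) * (d * d)‖ := by rw [key v]
      _ ≤ ‖v * d‖ * ‖d * d‖ := norm_mul_le _ _
      _ ≤ ‖v * d‖ * (‖d‖ * ‖d‖) := by
          have := norm_mul_le d d
          exact mul_le_mul_of_nonneg_left this (norm_nonneg _)
  have hq : ‖d‖ * ‖d‖ < 1 := by nlinarith [norm_nonneg d]
  have h0 : ‖v * d‖ ≤ 0 := by nlinarith [norm_nonneg (v * d)]
  exact norm_le_zero_iff.mp h0

variable [NormedSpace ℂ A] [IsScalarTower ℂ A A] [SMulCommClass ℂ A A]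

/-! ### Lines inside `L` -/

private lemma aux_line_mem {c e : A} (hc : ∀ x y : A, c * x * c * y = c * x * y)
    (H1 : ∀ x y : A, c * x * e * y = 0)
    (H2 : ∀ x y : A, e * x * c * y = e * x * y)
    (H3 : ∀ x y : A, e * x * e * y = 0) (s : ℂ) :
    ∀ x y : A, (c + s • e) * x * (c + s • e) * y = (c + s • e) * x * y := by
  intro x y
  simp only [add_mul, mul_add, smul_mul_assoc, mul_smul_comm, smul_smul]
  rw [hc, H1, H2, H3]
  simp

private lemma aux_line_zero {L : Set A} {a c e : A} {M : ℝ}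
    (hM : ∀ b ∈ connectedComponentIn L a, ‖b‖ ≤ M)
    (hcC : c ∈ connectedComponentIn L a)
    (hline : ∀ s : ℂ, c + s • e ∈ L) : e = 0 := by
  by_contra he
  have hepos : (0:ℝ) < ‖e‖ := norm_pos_iff.mpr he
  set f : ℂ → A := fun s => c + s • e with hf
  have hcont : Continuous f := by fun_prop
  have hpre : IsPreconnected (Set.range f) := by
    rw [← Set.image_univ]
    exact isPreconnected_univ.image f hcont.continuousOn
  have hsub : Set.range f ⊆ connectedComponentIn L c := by
    apply hpre.subset_connectedComponentIn
    · exact ⟨0, by simp [hf]⟩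
    · rintro - ⟨s, rfl⟩; exact hline s
  have hCC : connectedComponentIn L a = connectedComponentIn L c :=
    connectedComponentIn_eq hcC
  have hM' : ∀ s : ℂ, ‖f s‖ ≤ M := fun s => hM _ (hCC ▸ hsub ⟨s, rfl⟩)
  set r : ℝ := (M + ‖c‖ + 1) / ‖e‖ with hr
  have hMnn : 0 ≤ M := le_trans (norm_nonneg c) (hM c hcC)
  have hrn : ‖(r : ℂ)‖ = r := by
    rw [Complex.norm_real, Real.norm_of_nonneg]
    positivity
  have h1 : ‖(r : ℂ) • e‖ = M + ‖c‖ + 1 := by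
    rw [norm_smul, hrn, hr, div_mul_cancel₀]
    exact ne_of_gt hepos
  have h2 : ‖(r : ℂ) • e‖ - ‖c‖ ≤ ‖f (r : ℂ)‖ := by
    have heq : (r : ℂ) • e = f (r:ℂ) + -c := by simp [hf]
    calc ‖(r : ℂ) • e‖ - ‖c‖ = ‖f (r:ℂ) + -c‖ - ‖c‖ := by rw [heq]
      _ ≤ (‖f (r:ℂ)‖ + ‖c‖) - ‖c‖ := by
          have := norm_add_le (f (r:ℂ)) (-c)
          simpa using sub_le_sub_right this ‖c‖
      _ = ‖f (r:ℂ)‖ := by ring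
  have := hM' (r : ℂ)
  rw [h1] at h2
  linarith

end StmtAux

/-- In a complex (not necessarily unital) Banach algebra `A`, every connected
component of the subspace `L(A)` is either a singleton or unbounded in norm. -/
theorem stmt_14 {A : Type*} [NonUnitalNormedRing A] [NormedSpace ℂ A]
    [IsScalarTower ℂ A A] [SMulCommClass ℂ A A] [CompleteSpace A]
    {L : Set A}
    (hL : L = {a : A | ∀ x y : A, a * x * a * y = a * x * y}) :
    ∀ a ∈ L, connectedComponentIn L a = {a} ∨
      ∀ r : ℝ, ∃ b ∈ connectedComponentIn L a, r < ‖b‖ := by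
  intro a ha
  by_cases hub : ∀ r : ℝ, ∃ b ∈ connectedComponentIn L a, r < ‖b‖
  · exact Or.inr hub
  left
  push_neg at hub
  obtain ⟨M, hM⟩ := hub
  have haC : a ∈ connectedComponentIn L a := mem_connectedComponentIn ha
  -- Step 1: every point of the (bounded) component is central and
  -- right multiplication by it is idempotent.
  have step1 : ∀ c ∈ connectedComponentIn L a,
      (∀ u : A, c * u * c = c * u) ∧ (∀ u : A, c * u * c = u * c) := by
    intro c hcC
    have hcL : c ∈ L := connectedComponentIn_subset L a hcC
    have hc : ∀ x y : A, c * x * c * y = c * x * y := by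
      rw [hL] at hcL; exact hcL
    constructor
    · intro u
      have hline : ∀ s : ℂ, c + s • (c * u * c - c * u) ∈ L := by
        intro s
        rw [hL]
        refine aux_line_mem hc (aux_e1_H1 hc u) ?_ ?_ s
        · intro x y
          rw [show (c * u * c - c * u) * x * c * y
              = ((c * u * c - c * u) * x * c) * y from rfl,
            aux_e1_zero hc u x c, zero_mul, aux_e1_zero hc u x y]
        · intro x y
          rw [show (c * u * c - c * u) * x * (c * u * c - c * u) * y
              = ((c * u * c - c * u) * x * (c * u * c - c * u)) * y from rfl,
            aux_e1_zero hc u x (c * u * c - c * u), zero_mul]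
      have := aux_line_zero hM hcC hline
      exact sub_eq_zero.mp this
    · intro u
      have hline : ∀ s : ℂ, c + s • (c * u * c - u * c) ∈ L := by
        intro s
        rw [hL]
        exact aux_line_mem hc (aux_e2_H1 hc u) (aux_e2_H2 hc u) (aux_e2_H3 hc u) s
      have := aux_line_zero hM hcC hline
      exact sub_eq_zero.mp this
  -- Step 2: points of the component within distance 1 of `a` are equal to `a`.
  have ha' : ∀ x y : A, a * x * a * y = a * x * y := by
    rw [hL] at ha; exact ha
  have step2 : ∀ b ∈ connectedComponentIn L a, ‖b - a‖ < 1 → b = a := by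
    intro b hbC hlt
    obtain ⟨hbl, hbr⟩ := step1 b hbC
    obtain ⟨hal, har⟩ := step1 a haC
    have key := aux_key hbl hbr hal har
    have ann : ∀ v : A, v * (b - a) = 0 := aux_ann key hlt
    have comm_b : ∀ w : A, b * w = w * b := fun w => (hbl w).symm.trans (hbr w)
    have comm_a : ∀ w : A, a * w = w * a := fun w => (hal w).symm.trans (har w)
    have ann' : ∀ v : A, (b - a) * v = 0 := by
      intro v
      rw [sub_mul, comm_b v, comm_a v, ← mul_sub]
      exact ann v
    have hline : ∀ s : ℂ, a + s • (b - a) ∈ L := by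
      intro s
      rw [hL]
      refine aux_line_mem ha' ?_ ?_ ?_ s
      · intro x y
        rw [show a * x * (b - a) * y = ((a * x) * (b - a)) * y from rfl,
          ann (a * x), zero_mul]
      · intro x y
        rw [show (b - a) * x * a * y = (((b - a) * x) * a) * y from rfl,
          ann' x, zero_mul, zero_mul]
      · intro x y
        rw [show (b - a) * x * (b - a) * y = (((b - a) * x) * (b - a)) * y from rfl,
          ann' x, zero_mul, zero_mul]
    have := aux_line_zero hM haC hline
    exact sub_eq_zero.mp this
  -- Conclude by connectedness: the component is a singleton.
  have hpre : IsPreconnected (connectedComponentIn L a) :=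
    isPreconnected_connectedComponentIn
  have hCU : connectedComponentIn L a ⊆ Metric.ball a 1 := by
    by_contra hnc
    obtain ⟨z, hzC, hzU⟩ : ∃ z ∈ connectedComponentIn L a, z ∉ Metric.ball a 1 := by
      by_contra h
      push_neg at h
      exact hnc h
    have hzV : z ∈ (Metric.closedBall a (1/2 : ℝ))ᶜ := by
      simp only [Set.mem_compl_iff, Metric.mem_closedBall, not_le]
      have : (1:ℝ) ≤ dist z a := by
        simpa [Metric.mem_ball, not_lt] using hzU
      linarith
    have hcover : connectedComponentIn L a
        ⊆ Metric.ball a 1 ∪ (Metric.closedBall a (1/2 : ℝ))ᶜ := by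
      intro w _
      by_cases hw : dist w a ≤ 1/2
      · exact Or.inl (by simp only [Metric.mem_ball]; linarith)
      · exact Or.inr (by simpa [Metric.mem_closedBall] using hw)
    have hne := hpre (Metric.ball a 1) (Metric.closedBall a (1/2 : ℝ))ᶜ
      Metric.isOpen_ball Metric.isClosed_closedBall.isOpen_compl hcover
      ⟨a, haC, by simp⟩ ⟨z, hzC, hzV⟩
    obtain ⟨x, hxC, hxU, hxV⟩ := hne
    have hx : x = a := by
      apply step2 x hxC
      rw [← dist_eq_norm]
      exact Metric.mem_ball.mp hxU
    rw [hx] at hxV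
    simp at hxV
  apply Set.eq_of_subset_of_subset
  · intro b hbC
    have : ‖b - a‖ < 1 := by
      rw [← dist_eq_norm]
      exact Metric.mem_ball.mp (hCU hbC)
    exact step2 b hbC this
  · intro x hx
    rw [Set.mem_singleton_iff] at hx
    rw [hx]
    exact haC
end

section
/- Let A be a complex Banach algebra (not necessarily unital) and a ∈ L(A). If a is not in the center of A (i.e. a*x ≠ x*a for some x ∈ A) or a is not idempotent (a² ≠ a), then the connected component of a in the subspace L(A) is unbounded in norm. -/
private lemma key_line {A : Type*} [NonUnitalNormedRing A] [NormedSpace ℂ A]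
    [IsScalarTower ℂ A A] [SMulCommClass ℂ A A]
    (a v : A) (haL : ∀ x y : A, a * x * a * y = a * x * y)
    (h1 : ∀ x y : A, v * x * v * y = 0)
    (h2 : ∀ x y : A, a * x * v * y = 0)
    (h3 : ∀ x y : A, v * x * a * y = v * x * y) :
    ∀ (t : ℂ) (x y : A), (a + t • v) * x * (a + t • v) * y = (a + t • v) * x * y := by
  intro t x y
  simp only [add_mul, mul_add, smul_mul_assoc, mul_smul_comm, smul_smul]
  rw [haL, h1, h2, h3]
  simp [smul_add]

/-- In a complex (not necessarily unital) Banach algebra `A`, if `a ∈ L(A)` is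
non-central or non-idempotent, then the connected component of `a` in the subspace
`L(A)` is unbounded in norm. -/
theorem stmt_15 {A : Type*} [NonUnitalNormedRing A] [NormedSpace ℂ A]
    [IsScalarTower ℂ A A] [SMulCommClass ℂ A A] [CompleteSpace A]
    {L : Set A}
    (hL : L = {a : A | ∀ x y : A, a * x * a * y = a * x * y})
    (a : A) (haL : a ∈ L)
    (h : (∃ x : A, a * x ≠ x * a) ∨ a * a ≠ a) :
    ∀ r : ℝ, ∃ b ∈ connectedComponentIn L a, r < ‖b‖ := by
  subst hL
  simp only [Set.mem_setOf_eq] at haL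
  -- Step 1: produce a nonzero direction `v` with the whole line `a + t•v` in `L`
  suffices hmain : ∃ v : A, v ≠ 0 ∧
      ∀ (t : ℂ) (x y : A), (a + t • v) * x * (a + t • v) * y = (a + t • v) * x * y by
    obtain ⟨v, hv0, hvL⟩ := hmain
    intro r
    set f : ℝ → A := fun t => a + (t : ℂ) • v with hf
    have hcont : Continuous f := by
      exact continuous_const.add ((Complex.continuous_ofReal).smul continuous_const)
    have hSconn : IsPreconnected (Set.range f) := isPreconnected_range hcont
    have haS : a ∈ Set.range f := ⟨0, by simp [hf]⟩
    have hSsub : Set.range f ⊆ {a : A | ∀ x y : A, a * x * a * y = a * x * y} := by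
      rintro b ⟨t, rfl⟩
      exact hvL t
    have hsub := hSconn.subset_connectedComponentIn haS hSsub
    have hvpos : 0 < ‖v‖ := norm_pos_iff.mpr hv0
    set t : ℝ := (|r| + ‖a‖ + 1) / ‖v‖ with ht
    refine ⟨f t, hsub ⟨t, rfl⟩, ?_⟩
    have h1 : ‖(t : ℂ) • v‖ = |r| + ‖a‖ + 1 := by
      rw [norm_smul, Complex.norm_real, Real.norm_eq_abs, abs_of_pos (by positivity), ht,
        div_mul_cancel₀ _ hvpos.ne']
    have h2 : ‖(t : ℂ) • v‖ - ‖a‖ ≤ ‖f t‖ := by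
      calc ‖(t : ℂ) • v‖ - ‖a‖ ≤ ‖a + (t : ℂ) • v‖ := by
            have := norm_sub_norm_le ((t:ℂ) • v) (-a)
            simp only [sub_neg_eq_add, norm_neg] at this
            linarith [this, le_of_eq (add_comm ((t:ℂ)•v) a ▸ rfl : ‖(t:ℂ)•v + a‖ = ‖a + (t:ℂ)•v‖)]
        _ = ‖f t‖ := rfl
    have : r ≤ |r| := le_abs_self r
    linarith
  -- Step 2: find the direction
  by_cases hc : ∀ u : A, a * u * a = a * u
  · -- `a` is a genuine left multiplier: use centrality/idempotency defect as direction
    have W1 : ∀ u z : A, a * (u * (a * z)) = a * (u * z) := by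
      intro u z
      rw [← mul_assoc, ← mul_assoc, hc u, mul_assoc]
    have W2 : ∀ u w z : A, a * (u * (w * (a * z))) = a * (u * (w * z)) := by
      intro u w z
      have := W1 (u * w) z
      simpa [mul_assoc] using this
    have W3 : ∀ u w p z : A, a * (u * (w * (p * (a * z)))) = a * (u * (w * (p * z))) := by
      intro u w p z
      have := W1 (u * (w * p)) z
      simpa [mul_assoc] using this
    rcases h with ⟨x₀, hx⟩ | hid
    · refine ⟨a * x₀ - x₀ * a, sub_ne_zero.mpr hx, key_line a _ haL ?_ ?_ ?_⟩
      · intro x y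
        simp only [sub_mul, mul_sub, mul_assoc, W1, W2, W3]
        abel
      · intro x y
        simp only [sub_mul, mul_sub, mul_assoc, W1, W2, W3]
        abel
      · intro x y
        simp only [sub_mul, mul_sub, mul_assoc, W1, W2, W3]
        
    · refine ⟨a * a - a, sub_ne_zero.mpr hid, key_line a _ haL ?_ ?_ ?_⟩
      · intro x y
        simp only [sub_mul, mul_sub, mul_assoc, W1, W2, W3]
        abel
      · intro x y
        simp only [sub_mul, mul_sub, mul_assoc, W1, W2, W3]
        abel
      · intro x y
        simp only [sub_mul, mul_sub, mul_assoc, W1, W2, W3]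
        
  · -- some `a*u*a - a*u` is a nonzero left annihilator: use it as direction
    push_neg at hc
    obtain ⟨u, hu⟩ := hc
    have hz : ∀ z : A, (a * u * a - a * u) * z = 0 := by
      intro z
      rw [sub_mul, haL, sub_self]
    refine ⟨a * u * a - a * u, sub_ne_zero.mpr hu, key_line a _ haL ?_ ?_ ?_⟩
    · intro x y
      rw [hz, zero_mul, zero_mul]
    · intro x y
      rw [mul_assoc, hz, mul_zero]
    · intro x y
      rw [hz, zero_mul, zero_mul]
end

section
/- Let A be a very nice complex Banach algebra (not necessarily unital) and a ∈ L(A). Then a is an isolated point of L(A) (in the norm topology of A) if and only if a lies in the center of A (a*x = x*a for all x ∈ A). -/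
/-- Let `A` be a very nice complex (not necessarily unital) Banach algebra:
for every `a ∈ A`, if `a*x*y = a*x*a*y` for all `x, y`, then `a² = a` and
`a*x = a*x*a` for all `x`. Then `a ∈ L(A)` is isolated in `L(A)` iff `a` is
central. -/
theorem stmt_18 {A : Type*} [NonUnitalNormedRing A] [NormedSpace ℂ A]
    [IsScalarTower ℂ A A] [SMulCommClass ℂ A A] [CompleteSpace A]
    (hnice : ∀ a : A, (∀ x y : A, a * x * y = a * x * a * y) →
      a * a = a ∧ ∀ x : A, a * x = a * x * a)
    {L : Set A}
    (hL : L = {a : A | ∀ x y : A, a * x * a * y = a * x * y})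
    (a : A) (haL : a ∈ L) :
    (∃ ε > (0 : ℝ), ∀ b ∈ L, ‖b - a‖ < ε → b = a) ↔
      ∀ x : A, a * x = x * a := by
  subst hL
  simp only [Set.mem_setOf_eq] at haL
  obtain ⟨ha2, haxa⟩ := hnice a (fun x y => (haL x y).symm)
  -- general rewriting lemma: u*a*x*a = u*a*x
  have g : ∀ u x : A, u * a * x * a = u * a * x := fun u x => by
    rw [mul_assoc u a x, mul_assoc u (a * x) a, ← haxa, ← mul_assoc]
  constructor
  · rintro ⟨ε, hε, hiso⟩ x
    have key : ∀ z : A, z * a = a * z * a := by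
      intro z
      by_contra hne
      have hc0 : z * a - a * z * a ≠ 0 := sub_ne_zero.mpr hne
      have hcpos : (0:ℝ) < ‖z * a - a * z * a‖ := norm_pos_iff.mpr hc0
      have hmem : ∀ w x y : A,
          (a + (w * a - a * w * a)) * x * (a + (w * a - a * w * a)) * y
            = (a + (w * a - a * w * a)) * x * y := by
        intro w x y
        have h3 : a * x * (w * a - a * w * a) = 0 := by
          rw [mul_sub, ← mul_assoc, ← mul_assoc (a * x) (a * w) a,
            ← mul_assoc (a * x) a w, ← haxa, sub_self]
        have h4 : (w * a - a * w * a) * x * a = (w * a - a * w * a) * x := by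
          rw [sub_mul, sub_mul, g w x, g (a * w) x]
        have h5 : (w * a - a * w * a) * x * (w * a - a * w * a) = 0 := by
          rw [mul_sub, ← mul_assoc, ← mul_assoc _ (a * w) a, ← mul_assoc _ a w]
          rw [show (w * a - a * w * a) * x * a = (w * a - a * w * a) * x from h4]
          exact sub_self _
        have hxb : (a + (w * a - a * w * a)) * x * (a + (w * a - a * w * a))
            = (a + (w * a - a * w * a)) * x := by
          have expand : (a + (w * a - a * w * a)) * x * (a + (w * a - a * w * a))
              = a * x * a + a * x * (w * a - a * w * a)
                + ((w * a - a * w * a) * x * a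
                  + (w * a - a * w * a) * x * (w * a - a * w * a)) := by
            noncomm_ring
          rw [expand, ← haxa, h3, h4, h5, add_zero, add_zero, add_mul]
        rw [hxb]
      set t : ℂ := ((ε / (2 * ‖z * a - a * z * a‖) : ℝ) : ℂ) with ht
      have htpos : (0:ℝ) < ε / (2 * ‖z * a - a * z * a‖) := by positivity
      have ht0 : t ≠ 0 := by
        simp only [ht, ne_eq, Complex.ofReal_eq_zero]
        exact ne_of_gt htpos
      have hb : (t • z) * a - a * (t • z) * a = t • (z * a - a * z * a) := by
        simp [smul_mul_assoc, mul_smul_comm, smul_sub]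
      have hnorm : ‖(a + ((t • z) * a - a * (t • z) * a)) - a‖ < ε := by
        rw [add_sub_cancel_left, hb, norm_smul]
        have h1 : ‖t‖ = ε / (2 * ‖z * a - a * z * a‖) := by
          rw [ht, Complex.norm_real, Real.norm_eq_abs, abs_of_pos htpos]
        have h2 : ε / (2 * ‖z * a - a * z * a‖) * ‖z * a - a * z * a‖ = ε / 2 := by
          field_simp
        rw [h1, h2]
        linarith
      have hba := hiso _ (hmem (t • z)) hnorm
      have hz0 : (t • z) * a - a * (t • z) * a = 0 := by
        have := congrArg (· - a) hba
        simpa using this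
      rw [hb] at hz0
      rcases smul_eq_zero.mp hz0 with h | h
      · exact absurd h ht0
      · exact hc0 h
    rw [haxa x, ← key x]
  · intro hcen
    refine ⟨1, one_pos, ?_⟩
    intro b hb hdist
    obtain ⟨hb2, hbx⟩ := hnice b (fun x y => (hb x y).symm)
    have hcomm : a * b = b * a := hcen b
    have e1 : (b - a) * (b - a) = b + a - (a * b + a * b) := by
      have expand : (b - a) * (b - a) = b * b + a * a - (a * b + b * a) := by
        noncomm_ring
      rw [expand, hb2, ha2, ← hcomm]
    have f1 : a * b * b = a * b := by rw [mul_assoc, hb2]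
    have f2 : a * b * a = a * b := by rw [mul_assoc, ← hcomm, ← mul_assoc, ha2]
    have key : (b - a) * (b - a) * (b - a) = b - a := by
      rw [e1]
      have expand : (b + a - (a * b + a * b)) * (b - a)
          = b * b + a * b - (a * b * b + a * b * b)
            - (b * a + a * a - (a * b * a + a * b * a)) := by
        noncomm_ring
      rw [expand, hb2, ha2, f1, f2, ← hcomm]
      abel
    have hn : ‖b - a‖ ≤ ‖b - a‖ * ‖b - a‖ * ‖b - a‖ := by
      calc ‖b - a‖ = ‖(b - a) * (b - a) * (b - a)‖ := by rw [key]
        _ ≤ ‖(b - a) * (b - a)‖ * ‖b - a‖ := norm_mul_le _ _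
        _ ≤ ‖b - a‖ * ‖b - a‖ * ‖b - a‖ := by
            gcongr
            exact norm_mul_le _ _
    have h0 : ‖b - a‖ = 0 := by nlinarith [norm_nonneg (b - a)]
    exact sub_eq_zero.mp (norm_eq_zero.mp h0)
end

section
/- Let A be a very nice complex Banach algebra (not necessarily unital) and a ∈ L(A). Then the connected component of a in the subspace L(A) coincides with the connected component of a in the subspace I(A). -/
section Aux

variable {A : Type*} [NonUnitalNormedRing A] [NormedSpace ℂ A]
    [IsScalarTower ℂ A A] [SMulCommClass ℂ A A] [CompleteSpace A]

set_option linter.unusedSectionVars false in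
/-- If `e` is idempotent and `e*x*e = e*x` for all `x`, then the same holds for the image of `e`
in the unitization, with `x` ranging over the whole unitization. -/
private lemma stmt19_key (e : A) (he2 : e * e = e) (he3 : ∀ x : A, e * x = e * x * e) :
    ∀ X : Unitization ℂ A, (e : Unitization ℂ A) * X * e = (e : Unitization ℂ A) * X := by
  intro X
  ext
  · simp
  · simp only [Unitization.snd_mul, add_mul, smul_mul_assoc, he2, Unitization.snd_inr,
      Unitization.fst_inr, smul_zero, zero_smul, zero_mul, add_zero, zero_add,
      Unitization.fst_mul, ← he3]

/-- An idempotent `f` close to an element `e` of `L(A)` is itself in `L(A)`. -/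
private lemma stmt19_open (e f : A) (he2 : e * e = e) (he3 : ∀ x : A, e * x = e * x * e)
    (hf : f * f = f) (hd : ‖f - e‖ < (2 * ‖e‖ + 2)⁻¹) :
    ∀ x y : A, f * x * f * y = f * x * y := by
  set W := WithLp 1 (Unitization ℂ A) with hW
  let E : Unitization ℂ A ≃ₐ[ℂ] W := (WithLp.unitizationAlgEquiv (𝕜 := ℂ) (A := A) ℂ).symm
  have hnorm : ∀ x : A, ‖E (x : Unitization ℂ A)‖ = ‖x‖ := fun x =>
    WithLp.unitization_norm_inr x
  set p : W := E (e : Unitization ℂ A) with hp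
  set q : W := E (f : Unitization ℂ A) with hq
  have hp2 : p * p = p := by
    rw [hp, ← map_mul, ← Unitization.inr_mul, he2]
  have hq2 : q * q = q := by
    rw [hq, ← map_mul, ← Unitization.inr_mul, hf]
  have hqp : q - p = E ((f - e : A) : Unitization ℂ A) := by
    rw [Unitization.inr_sub, map_sub]
  set T : W := (2 • p - 1) * (q - p) with hT
  have hone : ‖(1 : W)‖ = 1 := by
    rw [WithLp.unitization_norm_def]
    simp [show WithLp.ofLp (1 : W) = (1 : Unitization ℂ A) from rfl]
  have hTnorm : ‖T‖ < 1 := by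
    have h1 : ‖T‖ ≤ (2 * ‖e‖ + 1) * ‖f - e‖ := by
      calc ‖T‖ ≤ ‖2 • p - 1‖ * ‖q - p‖ := norm_mul_le _ _
        _ ≤ (2 * ‖e‖ + 1) * ‖f - e‖ := by
            rw [hqp, hnorm]
            gcongr
            calc ‖2 • p - 1‖ ≤ ‖2 • p‖ + ‖(1 : W)‖ := norm_sub_le _ _
              _ ≤ 2 * ‖e‖ + 1 := by
                  rw [hone, two_smul]
                  have : ‖p + p‖ ≤ ‖p‖ + ‖p‖ := norm_add_le _ _
                  have hpe : ‖p‖ = ‖e‖ := hnorm e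
                  linarith
    have hpos : (0 : ℝ) < 2 * ‖e‖ + 2 := by positivity
    have h2 : (2 * ‖e‖ + 2) * ‖f - e‖ < (2 * ‖e‖ + 2) * (2 * ‖e‖ + 2)⁻¹ :=
      mul_lt_mul_of_pos_left hd hpos
    rw [mul_inv_cancel₀ hpos.ne'] at h2
    nlinarith [norm_nonneg (f - e), norm_nonneg e]
  set u : Wˣ := Units.oneSub (-T) (by rwa [norm_neg]) with hu
  have huval : (u : W) = 1 + T := by
    rw [hu, Units.val_oneSub, sub_neg_eq_add]
  have hw : (u : W) * q = p * (u : W) := by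
    have h1 : (u : W) * q = p * q := by
      rw [huval, hT]
      have e1 : (q - p) * q = q - p * q := by rw [sub_mul, hq2]
      have e2 : (2 • p - 1) * (q - p) * q = p * q - q := by
        rw [mul_assoc, e1, sub_mul, one_mul, smul_mul_assoc, mul_sub, ← mul_assoc, hp2,
          two_smul]
        abel
      rw [add_mul, one_mul, e2]
      abel
    have h2 : p * (u : W) = p * q := by
      rw [huval, hT]
      have e5 : p * (2 • p - 1) = p := by
        rw [mul_sub, mul_smul_comm, hp2, mul_one, two_smul]
        abel
      have e3 : p * ((2 • p - 1) * (q - p)) = p * q - p := by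
        rw [← mul_assoc, e5, mul_sub, hp2]
      rw [mul_add, mul_one, e3]
      abel
    rw [h1, h2]
  have hq_conj : q = ↑u⁻¹ * p * ↑u := by
    rw [mul_assoc, ← hw, ← mul_assoc, Units.inv_mul, one_mul]
  have hpW : ∀ Y : W, p * Y * p = p * Y := by
    intro Y
    have h := congrArg E (stmt19_key e he2 he3 (E.symm Y))
    simpa only [map_mul, AlgEquiv.apply_symm_apply, ← hp] using h
  have hqW : ∀ X : W, q * X * q = q * X := by
    intro X
    rw [hq_conj]
    calc ↑u⁻¹ * p * ↑u * X * (↑u⁻¹ * p * ↑u)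
        = ↑u⁻¹ * (p * (↑u * X * ↑u⁻¹) * p) * ↑u := by
          simp only [mul_assoc]
      _ = ↑u⁻¹ * (p * (↑u * X * ↑u⁻¹)) * ↑u := by rw [hpW]
      _ = ↑u⁻¹ * p * ↑u * X := by
          simp only [mul_assoc, Units.inv_mul, mul_one]
  intro x y
  have hinj : Function.Injective (fun z : A => E (z : Unitization ℂ A)) := fun z w h =>
    Unitization.inr_injective (E.injective h)
  apply hinj
  show E ((f * x * f * y : A) : Unitization ℂ A) = E ((f * x * y : A) : Unitization ℂ A)
  simp only [Unitization.inr_mul, map_mul, ← hq]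
  rw [hqW (E (x : Unitization ℂ A))]

end Aux

/-- Let `A` be a very nice complex (not necessarily unital) Banach algebra:
for every `a ∈ A`, if `a*x*y = a*x*a*y` for all `x, y`, then `a² = a` and
`a*x = a*x*a` for all `x`. Then for `a ∈ L(A)`, the connected component of `a`
in the subspace `L(A)` coincides with the connected component of `a` in the
subspace `I(A)` of idempotents. -/
theorem stmt_19 {A : Type*} [NonUnitalNormedRing A] [NormedSpace ℂ A]
    [IsScalarTower ℂ A A] [SMulCommClass ℂ A A] [CompleteSpace A]
    (hnice : ∀ a : A, (∀ x y : A, a * x * y = a * x * a * y) →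
      a * a = a ∧ ∀ x : A, a * x = a * x * a)
    {L I : Set A}
    (hL : L = {a : A | ∀ x y : A, a * x * a * y = a * x * y})
    (hI : I = {e : A | e * e = e})
    (a : A) (haL : a ∈ L) :
    connectedComponentIn L a = connectedComponentIn I a := by
  have hmem : ∀ e ∈ L, e * e = e ∧ ∀ x : A, e * x = e * x * e := by
    intro e he
    rw [hL] at he
    exact hnice e fun x y => (he x y).symm
  have hLI : L ⊆ I := by
    intro e he
    rw [hI]
    exact (hmem e he).1
  have hclosed : IsClosed L := by
    rw [hL]
    have : {a : A | ∀ x y : A, a * x * a * y = a * x * y} =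
        ⋂ (x : A) (y : A), {a : A | a * x * a * y = a * x * y} := by
      ext a; simp
    rw [this]
    exact isClosed_iInter fun x => isClosed_iInter fun y =>
      isClosed_eq (by fun_prop) (by fun_prop)
  set U : Set A := ⋃ e ∈ L, Metric.ball e (2 * ‖e‖ + 2)⁻¹ with hU
  have hUopen : IsOpen U := isOpen_biUnion fun _ _ => Metric.isOpen_ball
  have hLU : L ⊆ U := fun e he =>
    Set.mem_biUnion he (Metric.mem_ball_self (by positivity))
  have hUI : ∀ f ∈ I, f ∈ U → f ∈ L := by
    intro f hfI hfU
    obtain ⟨e, heL, hfe⟩ := Set.mem_iUnion₂.mp hfU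
    rw [Metric.mem_ball, dist_eq_norm] at hfe
    obtain ⟨he2, he3⟩ := hmem e heL
    rw [hI] at hfI
    rw [hL]
    exact stmt19_open e f he2 he3 hfI hfe
  have haI : a ∈ I := hLI haL
  refine subset_antisymm (connectedComponentIn_mono a hLI) ?_
  have hCsub : connectedComponentIn I a ⊆ L := by
    intro z hz
    by_contra hzL
    have hpre := isPreconnected_connectedComponentIn (x := a) (F := I)
    have hCI := connectedComponentIn_subset I a
    have hcover : connectedComponentIn I a ⊆ U ∪ Lᶜ := by
      intro w hw
      by_cases hwL : w ∈ L
      · exact Or.inl (hLU hwL)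
      · exact Or.inr hwL
    obtain ⟨w, hwC, hwU, hwL⟩ := hpre U Lᶜ hUopen hclosed.isOpen_compl hcover
      ⟨a, mem_connectedComponentIn haI, hLU haL⟩ ⟨z, hz, hzL⟩
    exact hwL (hUI w (hCI hwC) hwU)
  exact isPreconnected_connectedComponentIn.subset_connectedComponentIn
    (mem_connectedComponentIn haI) hCsub
end
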